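/- Let 1<p<∞ and φ ∈ 𝒢_p. Then there is a constant C (depending only on n, p, and φ) such that for every κ ∈ 𝒮(ℝⁿ) and every f ∈ 𝓜_{p,φ}(ℝⁿ), ∫_{ℝⁿ} |κ(x) f(x)| dx ≤ C ‖f‖_{𝓜_{p,φ}} · sup_{x∈ℝⁿ} (1+|x|)^{2n+1} |κ(x)|. -/

import Mathlib

open MeasureTheory ENNReal

noncomputable section

/-- Euclidean space `ℝⁿ`. -/
abbrev En (n : ℕ) := EuclideanSpace ℝ (Fin n)

/-- The axis-parallel closed cube with center `c` and side length `ℓ`. -/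
def cube (n : ℕ) (c : En n) (ℓ : ℝ) : Set (En n) :=
  {y | ∀ i, |y i - c i| ≤ ℓ / 2}

/-- The generalized Morrey quasinorm (with exponent `p`) of an `ℝ≥0∞`-valued function. -/
def morrey (n : ℕ) (p : ℝ) (φ : En n → ℝ → ℝ) (g : En n → ℝ≥0∞) : ℝ≥0∞ :=
  ⨆ (c : En n) (ℓ : ℝ) (_ : 0 < ℓ),
    (ENNReal.ofReal (φ c ℓ))⁻¹ *
      ((ENNReal.ofReal (ℓ ^ n))⁻¹ * ∫⁻ y in cube n c ℓ, g y ^ p) ^ (1 / p)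

/-- The generalized Morrey quasinorm of a real-valued function. -/
def morreyR (n : ℕ) (p : ℝ) (φ : En n → ℝ → ℝ) (f : En n → ℝ) : ℝ≥0∞ :=
  morrey n p φ (fun y => ENNReal.ofReal |f y|)

/-- The generalized Morrey quasinorm of a complex-valued function. -/
def morreyC (n : ℕ) (p : ℝ) (φ : En n → ℝ → ℝ) (f : En n → ℂ) : ℝ≥0∞ :=
  morrey n p φ (fun y => ENNReal.ofReal ‖f y‖)

/-- The generalized Morrey norm with exponent `q : ℝ≥0∞` (allowing `q = ∞`). -/
def morreyL (n : ℕ) (q : ℝ≥0∞) (φ : En n → ℝ → ℝ) (f : En n → ℝ) : ℝ≥0∞ :=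
  ⨆ (c : En n) (ℓ : ℝ) (_ : 0 < ℓ),
    (ENNReal.ofReal (φ c ℓ))⁻¹ * (ENNReal.ofReal (ℓ ^ n)) ^ (-(1 / q).toReal) *
      eLpNorm f q (volume.restrict (cube n c ℓ))

/-- The weak generalized Morrey quasinorm. -/
def wMorrey (n : ℕ) (p : ℝ) (φ : En n → ℝ → ℝ) (g : En n → ℝ≥0∞) : ℝ≥0∞ :=
  ⨆ (T : ℝ) (_ : 0 < T),
    ENNReal.ofReal T *
      morrey n p φ ({y | ENNReal.ofReal T < g y}.indicator fun _ => 1)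

/-- The class `𝒢_p`, with explicit almost-increasing constant `C`. -/
def GClassC (n : ℕ) (p : ℝ) (φ : En n → ℝ → ℝ) (C : ℝ) : Prop :=
  (∀ x r, 0 < r → 0 < φ x r) ∧
  (∀ x s r, 0 < s → s ≤ r → φ x r ≤ φ x s) ∧
  (1 ≤ C ∧ ∀ x s r, 0 < s → s ≤ r →
    φ x s * s ^ ((n : ℝ) / p) ≤ C * (φ x r * r ^ ((n : ℝ) / p)))

/-- The class `𝒢_p`. -/
def GClass (n : ℕ) (p : ℝ) (φ : En n → ℝ → ℝ) : Prop :=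
  ∃ C, GClassC n p φ C

/-- The `ℓ_q` norm of a sequence of extended nonnegative reals. -/
def lqNorm (q : ℝ≥0∞) (a : ℕ → ℝ≥0∞) : ℝ≥0∞ :=
  if q = ⊤ then ⨆ j, a j else (∑' j, a j ^ q.toReal) ^ (1 / q.toReal)

/-- The Hardy-Littlewood maximal function (over cubes). -/
def hlM (n : ℕ) (f : En n → ℝ) (x : En n) : ℝ≥0∞ :=
  ⨆ (c : En n) (ℓ : ℝ) (_ : 0 < ℓ) (_ : x ∈ cube n c ℓ),
    (ENNReal.ofReal (ℓ ^ n))⁻¹ * ∫⁻ y in cube n c ℓ, ENNReal.ofReal |f y|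

/-- `ℓ^∞` distance on `ℝⁿ`. -/
def linf (n : ℕ) (x y : En n) : ℝ := ⨆ i, |x i - y i|

/-- Tempered distributions on `ℝⁿ`. -/
abbrev TempDist (n : ℕ) := SchwartzMap (En n) ℝ →L[ℝ] ℝ

/-- The Schwartz seminorm quantity `p_N`. -/
def pN (n N : ℕ) (ψ : SchwartzMap (En n) ℝ) : ℝ≥0∞ :=
  ∑ m ∈ Finset.range (N + 1),
    ⨆ x : En n, ENNReal.ofReal ((1 + ‖x‖) ^ N * ‖iteratedFDeriv ℝ m (⇑ψ) x‖)

/-- The grand maximal function of a tempered distribution. -/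
def grandMax (n N : ℕ) (f : TempDist n) (x : En n) : ℝ≥0∞ :=
  ⨆ (ψ : SchwartzMap (En n) ℝ) (_ : pN n N ψ ≤ 1) (t : ℝ) (_ : 0 < t)
    (η : SchwartzMap (En n) ℝ) (_ : ∀ y, η y = (t ^ n)⁻¹ * ψ (t⁻¹ • (x - y))),
    ENNReal.ofReal |f η|

/-- The generalized Hardy-Morrey quasinorm, via the grand maximal function. -/
def hMorrey (n : ℕ) (p : ℝ) (φ : En n → ℝ → ℝ) (N : ℕ) (f : TempDist n) : ℝ≥0∞ :=
  morrey n p φ (grandMax n N f)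

/-- The heat maximal function `sup_{t>0} |e^{tΔ}f|` of a tempered distribution. -/
def heatMax (n : ℕ) (f : TempDist n) (x : En n) : ℝ≥0∞ :=
  ⨆ (t : ℝ) (_ : 0 < t) (η : SchwartzMap (En n) ℝ)
    (_ : ∀ y, η y = (4 * Real.pi * t) ^ (-(n : ℝ) / 2) *
      Real.exp (-‖x - y‖ ^ 2 / (4 * t))),
    ENNReal.ofReal |f η|

/-- The Peetre maximal function. -/
def peetreMax (n : ℕ) (r d : ℝ) (f : En n → ℂ) (x : En n) : ℝ≥0∞ :=
  ⨆ y : En n, ENNReal.ofReal (‖f (x - y)‖ / (1 + d * ‖y‖ ^ ((n : ℝ) / r)))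

/-- The (distributional) Fourier transform of `f` is supported in `Ω`. -/
def ftSupportedIn (n : ℕ) (f : En n → ℂ) (Ω : Set (En n)) : Prop :=
  ∀ ψ : SchwartzMap (En n) ℂ, Disjoint (tsupport ⇑ψ) Ω →
    ∫ x, f x * (SchwartzMap.fourierTransformCLM ℂ ψ) x = 0

/-! ### Auxiliary lemmas for `statement9` -/

lemma En.abs_coord_le_norm (n : ℕ) (x : En n) (i : Fin n) : |x i| ≤ ‖x‖ := by
  rw [EuclideanSpace.norm_eq]
  calc |x i| = Real.sqrt (|x i| ^ 2) := (Real.sqrt_sq (abs_nonneg _)).symm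
    _ ≤ Real.sqrt (∑ j, ‖x j‖ ^ 2) := by
        apply Real.sqrt_le_sqrt
        simpa [Real.norm_eq_abs] using
          Finset.single_le_sum (f := fun j => |x j| ^ 2)
            (fun j _ => sq_nonneg _) (Finset.mem_univ i)

lemma cube_measurableSet (n : ℕ) (c : En n) (ℓ : ℝ) : MeasurableSet (cube n c ℓ) := by
  have h : cube n c ℓ = ⋂ i, {y : En n | |y i - c i| ≤ ℓ / 2} := by
    ext y; simp [cube, Set.mem_iInter]
  rw [h]
  refine MeasurableSet.iInter fun i => measurableSet_le ?_ measurable_const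
  exact ((measurable_pi_apply (a := i)).comp (PiLp.volume_preserving_ofLp (Fin n)).measurable |>.sub measurable_const).abs

lemma volume_cube (n : ℕ) (c : En n) (ℓ : ℝ) (hℓ : 0 ≤ ℓ) :
    volume (cube n c ℓ) = ENNReal.ofReal (ℓ ^ n) := by
  have h : cube n c ℓ = (MeasurableEquiv.toLp 2 (Fin n → ℝ)).symm ⁻¹'
      (Set.univ.pi fun i => Set.Icc (c i - ℓ / 2) (c i + ℓ / 2)) := by
    ext y
    simp only [cube, Set.mem_setOf_eq, Set.mem_preimage, Set.mem_univ_pi, Set.mem_Icc,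
      MeasurableEquiv.coe_toLp_symm, abs_le]
    constructor
    · intro h i
      obtain ⟨h1, h2⟩ := h i
      exact ⟨by linarith, by linarith⟩
    · intro h i
      obtain ⟨h1, h2⟩ := h i
      exact ⟨by linarith, by linarith⟩
  rw [h, (EuclideanSpace.volume_preserving_symm_measurableEquiv_toLp (Fin n)).measure_preimage
      ((MeasurableSet.univ_pi fun i => measurableSet_Icc).nullMeasurableSet),
    volume_pi_pi]
  have hIcc : ∀ i : Fin n, volume (Set.Icc (c i - ℓ / 2) (c i + ℓ / 2))
      = ENNReal.ofReal ℓ := by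
    intro i
    rw [Real.volume_Icc]
    congr 1
    ring
  simp only [hIcc, Finset.prod_const, Finset.card_univ, Fintype.card_fin]
  rw [← ENNReal.ofReal_pow hℓ]

/-- Morrey ⇒ local L¹ bound via Hölder. -/
lemma morrey_L1 (n : ℕ) (p : ℝ) (hp1 : 1 < p) (φ : En n → ℝ → ℝ)
    (hφpos : ∀ x r, 0 < r → 0 < φ x r)
    (f : En n → ℝ) (hf : Measurable f) (c : En n) (ℓ : ℝ) (hℓ : 0 < ℓ) :
    ∫⁻ y in cube n c ℓ, ENNReal.ofReal |f y| ≤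
      ENNReal.ofReal (φ c ℓ * ℓ ^ n) * morreyR n p φ f := by
  have hp0 : (0 : ℝ) < p := lt_trans one_pos hp1
  have hpne : p ≠ 0 := ne_of_gt hp0
  set N := morreyR n p φ f with hNdef
  set G : En n → ℝ≥0∞ := fun y => ENNReal.ofReal |f y| with hGdef
  have hGm : Measurable G := hf.abs.ennreal_ofReal
  set I : ℝ≥0∞ := ∫⁻ y in cube n c ℓ, G y ^ p with hIdef
  have hφℓ : 0 < φ c ℓ := hφpos c ℓ hℓ
  have ha0 : (ENNReal.ofReal (φ c ℓ)) ≠ 0 := by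
    simp [ENNReal.ofReal_eq_zero, not_le, hφℓ]
  have haT : (ENNReal.ofReal (φ c ℓ)) ≠ ⊤ := ENNReal.ofReal_ne_top
  have hℓn : (0 : ℝ) < ℓ ^ n := by positivity
  have hL0 : (ENNReal.ofReal (ℓ ^ n)) ≠ 0 := by
    simp [ENNReal.ofReal_eq_zero, not_le, hℓn]
  have hLT : (ENNReal.ofReal (ℓ ^ n)) ≠ ⊤ := ENNReal.ofReal_ne_top
  have hterm : (ENNReal.ofReal (φ c ℓ))⁻¹ *
      ((ENNReal.ofReal (ℓ ^ n))⁻¹ * I) ^ (1 / p) ≤ N := by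
    rw [hNdef, morreyR, morrey]
    exact le_iSup_of_le c (le_iSup_of_le ℓ (le_iSup_of_le hℓ le_rfl))
  have h1 : ((ENNReal.ofReal (ℓ ^ n))⁻¹ * I) ^ (1 / p) ≤ ENNReal.ofReal (φ c ℓ) * N := by
    have h := mul_le_mul_right hterm (ENNReal.ofReal (φ c ℓ))
    rwa [← mul_assoc, ENNReal.mul_inv_cancel ha0 haT, one_mul] at h
  have h2 : (ENNReal.ofReal (ℓ ^ n))⁻¹ * I ≤ (ENNReal.ofReal (φ c ℓ) * N) ^ p := by
    have h := ENNReal.rpow_le_rpow h1 hp0.le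
    rwa [← ENNReal.rpow_mul, one_div, inv_mul_cancel₀ hpne, ENNReal.rpow_one] at h
  have h3 : I ≤ ENNReal.ofReal (ℓ ^ n) * (ENNReal.ofReal (φ c ℓ) * N) ^ p := by
    have h := mul_le_mul_right h2 (ENNReal.ofReal (ℓ ^ n))
    rwa [← mul_assoc, ENNReal.mul_inv_cancel hL0 hLT, one_mul] at h
  -- Hölder
  obtain hpq := Real.HolderConjugate.conjExponent hp1
  set q : ℝ := p.conjExponent with hq
  have hHolder := ENNReal.lintegral_mul_le_Lp_mul_Lq (volume.restrict (cube n c ℓ)) hpq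
    hGm.aemeasurable (aemeasurable_const (b := (1 : ℝ≥0∞)))
  have hvol : ∫⁻ _ in cube n c ℓ, (1 : ℝ≥0∞) = ENNReal.ofReal (ℓ ^ n) := by
    simp [lintegral_const, Measure.restrict_apply_univ, volume_cube n c ℓ hℓ.le]
  have hH : ∫⁻ y in cube n c ℓ, G y ≤ I ^ (1 / p) * (ENNReal.ofReal (ℓ ^ n)) ^ (1 / q) := by
    have h := hHolder
    simp only [Pi.mul_apply, mul_one, ENNReal.one_rpow] at h
    rwa [hvol, ← hIdef] at h
  have h4 : I ^ (1 / p) ≤ (ENNReal.ofReal (ℓ ^ n)) ^ (1 / p) *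
      (ENNReal.ofReal (φ c ℓ) * N) := by
    have h := ENNReal.rpow_le_rpow h3 (by positivity : (0:ℝ) ≤ 1 / p)
    rwa [ENNReal.mul_rpow_of_nonneg _ _ (by positivity : (0:ℝ) ≤ 1 / p),
      ← ENNReal.rpow_mul, mul_one_div_cancel hpne, ENNReal.rpow_one] at h
  calc ∫⁻ y in cube n c ℓ, G y
      ≤ I ^ (1 / p) * (ENNReal.ofReal (ℓ ^ n)) ^ (1 / q) := hH
    _ ≤ (ENNReal.ofReal (ℓ ^ n)) ^ (1 / p) * (ENNReal.ofReal (φ c ℓ) * N) *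
        (ENNReal.ofReal (ℓ ^ n)) ^ (1 / q) := mul_le_mul_left h4 _
    _ = ((ENNReal.ofReal (ℓ ^ n)) ^ (1 / p) * (ENNReal.ofReal (ℓ ^ n)) ^ (1 / q)) *
        (ENNReal.ofReal (φ c ℓ) * N) := by ring
    _ = ENNReal.ofReal (ℓ ^ n) * (ENNReal.ofReal (φ c ℓ) * N) := by
        rw [← ENNReal.rpow_add _ _ hL0 hLT]
        rw [show 1 / p + 1 / q = 1 by
          rw [one_div, one_div]; exact hpq.inv_add_inv_eq_one]
        rw [ENNReal.rpow_one]
    _ = ENNReal.ofReal (φ c ℓ * ℓ ^ n) * N := by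
        rw [ENNReal.ofReal_mul hφℓ.le]; ring

/-- The annular decomposition of `ℝⁿ` by dyadic cubes. -/
def Tann (n : ℕ) : ℕ → Set (En n)
  | 0 => cube n 0 2
  | j + 1 => cube n 0 (2 ^ (j + 2)) \ cube n 0 (2 ^ (j + 1))

lemma Tann_subset (n : ℕ) (j : ℕ) : Tann n j ⊆ cube n 0 (2 ^ (j + 1)) := by
  cases j with
  | zero => simp [Tann]
  | succ m => exact Set.diff_subset

lemma Tann_cover (n : ℕ) : (Set.univ : Set (En n)) ⊆ ⋃ j, Tann n j := by
  classical
  intro x _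
  have hex : ∃ k, x ∈ cube n 0 (2 ^ (k + 1)) := by
    obtain ⟨k, hk⟩ := pow_unbounded_of_one_lt (R := ℝ) ‖x‖ one_lt_two
    refine ⟨k, fun i => ?_⟩
    have h1 : |x i - (0 : En n) i| = |x i| := by norm_num
    have h2 : (2 : ℝ) ^ (k + 1) / 2 = 2 ^ k := by rw [pow_succ]; ring
    rw [h1, h2]
    exact le_trans (En.abs_coord_le_norm n x i) hk.le
  obtain ⟨J, hJ, hJmin⟩ : ∃ J, x ∈ cube n 0 (2 ^ (J + 1)) ∧
      ∀ m < J, x ∉ cube n 0 (2 ^ (m + 1)) :=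
    ⟨Nat.find hex, Nat.find_spec hex, fun m hm => Nat.find_min hex hm⟩
  cases J with
  | zero => exact Set.mem_iUnion.2 ⟨0, by simpa [Tann] using hJ⟩
  | succ m =>
      exact Set.mem_iUnion.2 ⟨m + 1, ⟨hJ, hJmin m (Nat.lt_succ_self m)⟩⟩

lemma Tann_norm (n : ℕ) (j : ℕ) (x : En n) (hx : x ∈ Tann n j) :
    (2 : ℝ) ^ j ≤ 2 * (1 + ‖x‖) := by
  cases j with
  | zero =>
      have := norm_nonneg x
      simp only [pow_zero]
      linarith
  | succ m =>
      obtain ⟨-, hnot⟩ := hx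
      have hnot' : ¬ ∀ i, |x i - (0 : En n) i| ≤ 2 ^ (m + 1) / 2 := hnot
      obtain ⟨i, hi⟩ := not_forall.1 hnot'
      have h1 : |x i - (0 : En n) i| = |x i| := by norm_num
      have h2 : (2 : ℝ) ^ (m + 1) / 2 = 2 ^ m := by rw [pow_succ]; ring
      rw [h1, h2] at hi
      have h3 : (2 : ℝ) ^ m < |x i| := lt_of_not_ge hi
      have h4 := En.abs_coord_le_norm n x i
      have h5 : (2 : ℝ) ^ (m + 1) = 2 * 2 ^ m := by rw [pow_succ]; ring
      linarith

theorem statement9 (n : ℕ) (hn : 0 < n) (p : ℝ) (hp1 : 1 < p)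
    (φ : En n → ℝ → ℝ) (hφ : GClass n p φ) :
    ∃ C : ℝ, 0 < C ∧
      ∀ (κ : SchwartzMap (En n) ℝ) (f : En n → ℝ), Measurable f → morreyR n p φ f ≠ ⊤ →
        (∫⁻ x, ENNReal.ofReal |κ x * f x|) ≤
          ENNReal.ofReal (C * ⨆ x : En n, (1 + ‖x‖) ^ (2 * n + 1) * |κ x|) *
            morreyR n p φ f := by
  obtain ⟨C₀, hφpos, hφdec, -, -⟩ := hφ
  set F := φ 0 1 with hFdef
  have hF0 : 0 < F := hφpos 0 1 one_pos
  refine ⟨F * 2 ^ (3 * n + 2), by positivity, ?_⟩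
  intro κ f hf _
  set N := morreyR n p φ f with hNdef
  set M := ⨆ x : En n, (1 + ‖x‖) ^ (2 * n + 1) * |κ x| with hMdef
  -- the sup defining M is attained below a finite bound
  have hbdd : BddAbove (Set.range fun x : En n => (1 + ‖x‖) ^ (2 * n + 1) * |κ x|) := by
    obtain ⟨B, hB⟩ : ∃ B, ∀ x : En n, (1 + ‖x‖) ^ (2 * n + 1) * ‖κ x‖ ≤ B := by
      refine ⟨2 ^ (2 * n + 1) *
        (Finset.Iic (2 * n + 1, 0)).sup
          (fun m => SchwartzMap.seminorm ℝ m.1 m.2) κ, fun x => ?_⟩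
      have h := SchwartzMap.one_add_le_sup_seminorm_apply (𝕜 := ℝ)
        (m := (2 * n + 1, 0)) le_rfl le_rfl κ x
      simpa [norm_iteratedFDeriv_zero] using h
    refine ⟨B, ?_⟩
    rintro - ⟨x, rfl⟩
    simpa [Real.norm_eq_abs] using hB x
  have hMle : ∀ x : En n, (1 + ‖x‖) ^ (2 * n + 1) * |κ x| ≤ M :=
    fun x => le_ciSup hbdd x
  have hM0 : 0 ≤ M := le_trans (by positivity) (hMle 0)
  -- the κ bound on each annulus
  have hκb : ∀ j : ℕ, ∀ x ∈ Tann n j,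
      |κ x| ≤ 2 ^ (2 * n + 1) * M / 2 ^ (j * (2 * n + 1)) := by
    intro j x hx
    rw [le_div_iff₀ (by positivity)]
    calc |κ x| * 2 ^ (j * (2 * n + 1)) = |κ x| * ((2 : ℝ) ^ j) ^ (2 * n + 1) := by
          rw [← pow_mul]
      _ ≤ |κ x| * (2 * (1 + ‖x‖)) ^ (2 * n + 1) := by
          have h := pow_le_pow_left₀ (by positivity) (Tann_norm n j x hx) (2 * n + 1)
          exact mul_le_mul_of_nonneg_left h (abs_nonneg _)
      _ = 2 ^ (2 * n + 1) * ((1 + ‖x‖) ^ (2 * n + 1) * |κ x|) := by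
          rw [mul_pow]; ring
      _ ≤ 2 ^ (2 * n + 1) * M := mul_le_mul_of_nonneg_left (hMle x) (by positivity)
  -- the L¹ bound on each cube
  have hQ : ∀ j : ℕ, ∫⁻ x in cube n 0 (2 ^ (j + 1)), ENNReal.ofReal |f x| ≤
      ENNReal.ofReal (F * 2 ^ ((j + 1) * n)) * N := by
    intro j
    refine le_trans (morrey_L1 n p hp1 φ hφpos f hf 0 (2 ^ (j + 1)) (by positivity)) ?_
    refine mul_le_mul_left (ENNReal.ofReal_le_ofReal ?_) _
    have h1 : ((2 : ℝ) ^ (j + 1)) ^ n = 2 ^ ((j + 1) * n) := (pow_mul 2 (j + 1) n).symm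
    rw [h1]
    have h2 : φ 0 (2 ^ (j + 1)) ≤ F :=
      hφdec 0 1 (2 ^ (j + 1)) one_pos (one_le_pow₀ one_le_two)
    exact mul_le_mul_of_nonneg_right h2 (by positivity)
  -- per-annulus estimate
  set K : ℝ := M * F * 2 ^ (3 * n + 1) with hKdef
  set r : ℝ := ((2 : ℝ)⁻¹) ^ (n + 1) with hrdef
  have hr0 : 0 ≤ r := by positivity
  have hK0 : 0 ≤ K := by positivity
  have key : ∀ j : ℕ, ∫⁻ x in Tann n j, ENNReal.ofReal |κ x * f x| ≤
      ENNReal.ofReal (K * r ^ j) * N := by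
    intro j
    set b : ℝ := 2 ^ (2 * n + 1) * M / 2 ^ (j * (2 * n + 1)) with hbdef
    have hb0 : 0 ≤ b := by positivity
    calc ∫⁻ x in Tann n j, ENNReal.ofReal |κ x * f x|
        ≤ ∫⁻ x in Tann n j, ENNReal.ofReal b * ENNReal.ofReal |f x| := by
          refine setLIntegral_mono (measurable_const.mul hf.abs.ennreal_ofReal) ?_
          intro x hx
          rw [abs_mul, ENNReal.ofReal_mul (abs_nonneg _)]
          exact mul_le_mul_left (ENNReal.ofReal_le_ofReal (hκb j x hx)) _
      _ = ENNReal.ofReal b * ∫⁻ x in Tann n j, ENNReal.ofReal |f x| :=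
          lintegral_const_mul _ hf.abs.ennreal_ofReal
      _ ≤ ENNReal.ofReal b * ∫⁻ x in cube n 0 (2 ^ (j + 1)), ENNReal.ofReal |f x| :=
          mul_le_mul_right (lintegral_mono_set (Tann_subset n j)) _
      _ ≤ ENNReal.ofReal b * (ENNReal.ofReal (F * 2 ^ ((j + 1) * n)) * N) :=
          mul_le_mul_right (hQ j) _
      _ = ENNReal.ofReal (K * r ^ j) * N := by
          rw [← mul_assoc, ← ENNReal.ofReal_mul hb0]
          congr 2
          have e1 : (2 : ℝ) ^ (j * (2 * n + 1)) = 2 ^ (j * n) * 2 ^ (j * (n + 1)) := by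
            rw [← pow_add]; congr 1; ring
          have e2 : (2 : ℝ) ^ ((j + 1) * n) = 2 ^ n * 2 ^ (j * n) := by
            rw [← pow_add]; congr 1; ring
          have e3 : (2 : ℝ) ^ (3 * n + 1) = 2 ^ (2 * n + 1) * 2 ^ n := by
            rw [← pow_add]; congr 1; ring
          have e4 : r ^ j = ((2 : ℝ) ^ (j * (n + 1)))⁻¹ := by
            rw [hrdef, ← pow_mul, inv_pow]
            congr 2
            ring
          rw [hbdef, hKdef, e1, e2, e3, e4]
          have p1 : (0:ℝ) < 2 ^ (j * n) := by positivity
          have p2 : (0:ℝ) < 2 ^ (j * (n + 1)) := by positivity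
          field_simp
  -- summing up
  have hgeom : (1 - ENNReal.ofReal r)⁻¹ ≤ 2 := by
    have hr2 : ENNReal.ofReal r ≤ 2⁻¹ := by
      have hrle : r ≤ 2⁻¹ := by
        rw [hrdef]
        calc ((2 : ℝ)⁻¹) ^ (n + 1) ≤ ((2 : ℝ)⁻¹) ^ 1 :=
              pow_le_pow_of_le_one (by norm_num) (by norm_num) (Nat.succ_le_succ n.zero_le)
          _ = 2⁻¹ := pow_one _
      calc ENNReal.ofReal r ≤ ENNReal.ofReal 2⁻¹ := ENNReal.ofReal_le_ofReal hrle
        _ = 2⁻¹ := by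
            rw [ENNReal.ofReal_inv_of_pos two_pos]
            norm_num
    have hsub : (2 : ℝ≥0∞)⁻¹ ≤ 1 - ENNReal.ofReal r := by
      have h := tsub_le_tsub_left hr2 (1 : ℝ≥0∞)
      calc (2 : ℝ≥0∞)⁻¹ = 1 - 2⁻¹ := ENNReal.one_sub_inv_two.symm
        _ ≤ 1 - ENNReal.ofReal r := h
    calc (1 - ENNReal.ofReal r)⁻¹ ≤ ((2 : ℝ≥0∞)⁻¹)⁻¹ := ENNReal.inv_le_inv.2 hsub
      _ = 2 := inv_inv _
  calc ∫⁻ x, ENNReal.ofReal |κ x * f x|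
      = ∫⁻ x in Set.univ, ENNReal.ofReal |κ x * f x| := (setLIntegral_univ _).symm
    _ ≤ ∫⁻ x in ⋃ j, Tann n j, ENNReal.ofReal |κ x * f x| :=
        lintegral_mono_set (Tann_cover n)
    _ ≤ ∑' j, ∫⁻ x in Tann n j, ENNReal.ofReal |κ x * f x| := lintegral_iUnion_le _ _
    _ ≤ ∑' j, ENNReal.ofReal (K * r ^ j) * N := ENNReal.tsum_le_tsum key
    _ = (∑' j, ENNReal.ofReal K * (ENNReal.ofReal r) ^ j) * N := by
        rw [← ENNReal.tsum_mul_right]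
        refine tsum_congr fun j => ?_
        congr 1
        rw [ENNReal.ofReal_mul hK0, ENNReal.ofReal_pow hr0]
    _ = ENNReal.ofReal K * (1 - ENNReal.ofReal r)⁻¹ * N := by
        rw [ENNReal.tsum_mul_left, ENNReal.tsum_geometric]
    _ ≤ ENNReal.ofReal K * 2 * N := by
        exact mul_le_mul_left (mul_le_mul_right hgeom _) _
    _ = ENNReal.ofReal (F * 2 ^ (3 * n + 2) * M) * N := by
        congr 1
        rw [show (2 : ℝ≥0∞) = ENNReal.ofReal 2 by norm_num,
          ← ENNReal.ofReal_mul hK0]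
        congr 1
        rw [hKdef]
        rw [show (2:ℝ) ^ (3 * n + 2) = 2 ^ (3 * n + 1) * 2 by rw [pow_succ]]
        ring

end
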